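/- The likelihood ratio statistic for unknown noise variance equals −n·log(1 − 2F_σ/n): writing Â := M⁻¹N, σ̂² := (⟨x,x⟩ − NᵀM⁻¹N)/n, σ_r² := ⟨x,x⟩/n and F_σ := (1/2)·(NᵀM⁻¹N)/σ_r², and assuming σ̂² > 0 (hence also σ_r² > 0), one has 2·log( Λ(Â, σ̂²) / Λ(0, σ_r²) ) = −n·log(1 − 2F_σ/n). -/

import Mathlib

open Real BigOperators

/-- The likelihood ratio statistic for unknown noise variance equals
−n·log(1 − 2F_σ/n). -/
theorem likelihood_ratio_unknown_variance
    (n L : ℕ) (x : Fin n → ℝ) (h : Fin L → Fin n → ℝ)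
    (ip : (Fin n → ℝ) → (Fin n → ℝ) → ℝ)
    (hip : ip = fun u v => ∑ t, u t * v t)
    (N : Fin L → ℝ) (hN : N = fun l => ip x (h l))
    (M : Matrix (Fin L) (Fin L) ℝ) (hM : M = fun l l' => ip (h l) (h l'))
    (hMpd : M.PosDef)
    (Λ : (Fin L → ℝ) → ℝ → ℝ)
    (hΛ : Λ = fun A σ2 => (2 * Real.pi * σ2) ^ (-(n : ℝ) / 2) *
        Real.exp (-(ip (fun t => x t - ∑ l, A l * h l t)
                       (fun t => x t - ∑ l, A l * h l t)) / (2 * σ2)))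
    (Ahat : Fin L → ℝ) (hAhat : Ahat = fun l => ∑ l', M⁻¹ l' l * N l')
    (σhat2 : ℝ)
    (hσhat2 : σhat2 = (ip x x - ∑ l, ∑ l', N l * M⁻¹ l' l * N l') / n)
    (hσhat2pos : 0 < σhat2)
    (σr2 : ℝ) (hσr2 : σr2 = ip x x / n)
    (Fσ : ℝ) (hFσ : Fσ = (1 / 2) * (∑ l, ∑ l', N l * M⁻¹ l' l * N l') / σr2) :
    2 * Real.log (Λ Ahat σhat2 / Λ (fun _ => 0) σr2) =
      -(n : ℝ) * Real.log (1 - 2 * Fσ / n) := by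
  subst hip
  have hdet : M.det ≠ 0 := hMpd.det_pos.ne'
  have hn : (n : ℝ) ≠ 0 := by
    intro h0
    rw [hσhat2, h0, div_zero] at hσhat2pos
    exact lt_irrefl 0 hσhat2pos
  have hnpos : (0:ℝ) < n := by
    rcases (Nat.cast_nonneg n : (0:ℝ) ≤ n).lt_or_eq with h' | h'
    · exact h'
    · exact absurd h'.symm hn
  have hBsymm : ∀ a b, M⁻¹ a b = M⁻¹ b a := by
    intro a b
    conv_lhs => rw [← (hMpd.inv).1]
    simp [Matrix.conjTranspose_apply]
  have hAhat' : Ahat = Matrix.mulVec M⁻¹ N := by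
    rw [hAhat]; funext l
    simp only [Matrix.mulVec, dotProduct]
    exact Finset.sum_congr rfl fun l' _ => by rw [hBsymm]
  have hMA : Matrix.mulVec M Ahat = N := by
    rw [hAhat', Matrix.mulVec_mulVec, M.mul_nonsing_inv (isUnit_iff_ne_zero.mpr hdet), Matrix.one_mulVec]
  set Q : ℝ := ∑ l, ∑ l', N l * M⁻¹ l' l * N l' with hQ
  have hQ1 : Q = ∑ l, Ahat l * N l := by
    rw [hQ, hAhat]
    refine Finset.sum_congr rfl fun l _ => ?_
    rw [Finset.sum_mul]
    exact Finset.sum_congr rfl fun l' _ => by ring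
  have hQnonneg : 0 ≤ Q := by
    have h2 := hMpd.inv.posSemidef.dotProduct_mulVec_nonneg N
    rw [hQ1, hAhat']
    simp only [dotProduct, star_trivial] at h2
    calc (0:ℝ) ≤ ∑ l, N l * (Matrix.mulVec M⁻¹ N) l := h2
    _ = ∑ l, (Matrix.mulVec M⁻¹ N) l * N l := Finset.sum_congr rfl fun l _ => mul_comm _ _
  -- cross term
  have hxs : (∑ t, x t * ∑ l, Ahat l * h l t) = Q := by
    simp_rw [Finset.mul_sum]
    rw [Finset.sum_comm, hQ1, hN]
    refine Finset.sum_congr rfl fun l _ => ?_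
    rw [Finset.mul_sum]
    exact Finset.sum_congr rfl fun t _ => by ring
  -- quadratic term
  have hss : (∑ t, (∑ l, Ahat l * h l t) * (∑ l', Ahat l' * h l' t)) = Q := by
    calc ∑ t, (∑ l, Ahat l * h l t) * (∑ l', Ahat l' * h l' t)
        = ∑ l, Ahat l * ∑ l', M l l' * Ahat l' := by
          simp_rw [Finset.sum_mul_sum]
          rw [Finset.sum_comm]
          refine Finset.sum_congr rfl fun l _ => ?_
          rw [Finset.sum_comm, Finset.mul_sum]
          refine Finset.sum_congr rfl fun l' _ => ?_
          rw [hM]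
          simp only []
          rw [Finset.sum_mul, Finset.mul_sum]
          exact Finset.sum_congr rfl fun t _ => by ring
      _ = ∑ l, Ahat l * N l := by
          refine Finset.sum_congr rfl fun l _ => ?_
          congr 1
          exact congrFun hMA l
      _ = Q := hQ1.symm
  have key : (∑ t, (x t - ∑ l, Ahat l * h l t) * (x t - ∑ l, Ahat l * h l t))
      = (∑ t, x t * x t) - Q := by
    have expand : ∀ t, (x t - ∑ l, Ahat l * h l t) * (x t - ∑ l, Ahat l * h l t)
        = x t * x t - 2 * (x t * ∑ l, Ahat l * h l t)
          + (∑ l, Ahat l * h l t) * (∑ l', Ahat l' * h l' t) := fun t => by ring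
    simp only [expand]
    rw [Finset.sum_add_distrib, Finset.sum_sub_distrib, ← Finset.mul_sum, hxs, hss]
    ring
  -- scalar identities
  have hipQ : (∑ t, x t * x t) - Q = n * σhat2 := by
    rw [hσhat2]; field_simp
  have hipxx : (∑ t, x t * x t) = n * σr2 := by
    rw [hσr2]; field_simp
  have hσr2pos : 0 < σr2 := by
    have h1 : (0:ℝ) < n * σr2 := by nlinarith
    nlinarith
  have hσhne : σhat2 ≠ 0 := hσhat2pos.ne'
  have hσrne : σr2 ≠ 0 := hσr2pos.ne'
  have hratio : 1 - 2 * Fσ / n = σhat2 / σr2 := by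
    rw [hFσ]
    field_simp
    nlinarith [hipQ, hipxx]
  have hb1 : (0:ℝ) < 2 * Real.pi * σhat2 := by positivity
  have hb2 : (0:ℝ) < 2 * Real.pi * σr2 := by positivity
  have hΛ1 : Λ Ahat σhat2 = (2 * Real.pi * σhat2) ^ (-(n:ℝ)/2)
      * Real.exp (-((n:ℝ)/2)) := by
    rw [hΛ]
    simp only []
    congr 1
    rw [key, hipQ]
    field_simp
  have hΛ2 : Λ (fun _ => 0) σr2 = (2 * Real.pi * σr2) ^ (-(n:ℝ)/2)
      * Real.exp (-((n:ℝ)/2)) := by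
    rw [hΛ]
    simp only [zero_mul, Finset.sum_const_zero, sub_zero]
    congr 1
    rw [hipxx]
    field_simp
  have hp1 : (0:ℝ) < (2 * Real.pi * σhat2) ^ (-(n:ℝ)/2) * Real.exp (-((n:ℝ)/2)) := by
    positivity
  have hp2 : (0:ℝ) < (2 * Real.pi * σr2) ^ (-(n:ℝ)/2) * Real.exp (-((n:ℝ)/2)) := by
    positivity
  have h2π : (2 * Real.pi) ≠ 0 := by positivity
  rw [hΛ1, hΛ2, hratio, Real.log_div hp1.ne' hp2.ne',
    Real.log_mul (by positivity) (Real.exp_pos _).ne',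
    Real.log_mul (by positivity) (Real.exp_pos _).ne',
    Real.log_rpow hb1, Real.log_rpow hb2,
    Real.log_div hσhne hσrne, Real.log_mul h2π hσhne, Real.log_mul h2π hσrne]
  ring
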